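/- Let Tⁿ be the flat n-torus (n ≥ 1). Then Tⁿ × Tⁿ cannot be partitioned into n locally compact subsets each of which admits a GMPR; equivalently, the geodesic complexity of Tⁿ is at least n. -/

import Mathlib

/-- A geodesic in a metric space: a continuous path `γ : [0,1] → X` moving at
constant speed `c` and realizing distances, i.e. `d(γ s, γ t) = c·|s − t|`. -/
def IsGeodesic {X : Type*} [PseudoMetricSpace X] (γ : C(unitInterval, X)) : Prop :=
  ∃ c : ℝ, ∀ s t : unitInterval, dist (γ s) (γ t) = c * |(s : ℝ) - (t : ℝ)|

/-- A geodesic motion planning rule (GMPR) on `E ⊆ X × X`: a map, continuous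
on `E`, sending each pair `(x, y) ∈ E` to a geodesic from `x` to `y`. -/
def IsGMPROn {X : Type*} [PseudoMetricSpace X] (E : Set (X × X))
    (σ' : X × X → C(unitInterval, X)) : Prop :=
  ContinuousOn σ' E ∧ ∀ e ∈ E, IsGeodesic (σ' e) ∧ σ' e 0 = e.1 ∧ σ' e 1 = e.2

/-- The integer lattice `ℤⁿ` inside Euclidean space `ℝⁿ`. -/
noncomputable def intLattice (n : ℕ) : AddSubgroup (EuclideanSpace ℝ (Fin n)) where
  carrier := {x | ∀ i, ∃ m : ℤ, x i = m}
  zero_mem' := fun i => ⟨0, by simp⟩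
  add_mem' := by
    intro a b ha hb i
    obtain ⟨m, hm⟩ := ha i
    obtain ⟨l, hl⟩ := hb i
    exact ⟨m + l, by push_cast [PiLp.add_apply, hm, hl]; ring⟩
  neg_mem' := by
    intro a ha i
    obtain ⟨m, hm⟩ := ha i
    exact ⟨-m, by push_cast [PiLp.neg_apply, hm]; ring⟩

instance intLattice_isClosed (n : ℕ) :
    IsClosed ((intLattice n : AddSubgroup (EuclideanSpace ℝ (Fin n))) :
      Set (EuclideanSpace ℝ (Fin n))) := by
  have : ((intLattice n : AddSubgroup (EuclideanSpace ℝ (Fin n))) :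
      Set (EuclideanSpace ℝ (Fin n))) =
      ⋂ i, (fun x : EuclideanSpace ℝ (Fin n) => x i) ⁻¹'
        (Set.range ((↑) : ℤ → ℝ)) := by
    ext x
    simp [intLattice, Set.mem_iInter, eq_comm]
  rw [this]
  exact isClosed_iInter fun i =>
    Int.isClosedEmbedding_coe_real.isClosed_range.preimage
      (EuclideanSpace.proj i).continuous

/-- The flat `n`-torus `ℝⁿ/ℤⁿ`, equipped with the quotient metric induced by
the Euclidean metric on `ℝⁿ`. -/
abbrev FlatTorus (n : ℕ) := EuclideanSpace ℝ (Fin n) ⧸ intLattice n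

open scoped RealInnerProductSpace

namespace GCwork
variable {n : ℕ}

abbrev Eu (n : ℕ) := EuclideanSpace ℝ (Fin n)

/-- distance to nearest integer -/
noncomputable def dint (t : ℝ) : ℝ := |t - round t|

lemma dint_nonneg (t : ℝ) : 0 ≤ dint t := abs_nonneg _

lemma dint_le_half (t : ℝ) : dint t ≤ 1/2 := by simpa [dint] using abs_sub_round t

lemma dint_le (t : ℝ) (m : ℤ) : dint t ≤ |t + m| := by
  rcases le_or_gt (1/2 : ℝ) |t + m| with h | h
  · exact (dint_le_half t).trans h
  · have hr : |t - round t| ≤ 1/2 := by simpa using abs_sub_round t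
    have hint : |((-m : ℤ) : ℝ) - ((round t : ℤ) : ℝ)| < 1 := by
      have heq : ((-m : ℤ) : ℝ) - ((round t : ℤ) : ℝ) = -(t + m) + (t - round t) := by
        push_cast; ring
      calc |((-m : ℤ) : ℝ) - ((round t : ℤ) : ℝ)| = |(-(t + m)) + (t - round t)| := by
            rw [heq]
        _ ≤ |(-(t+m))| + |t - round t| := abs_add_le _ _
        _ < 1 := by rw [abs_neg]; linarith
    have hmz : (-m : ℤ) = round t := by
      have h2 : |(-m - round t : ℤ)| < 1 := by
        have : |((-m - round t : ℤ) : ℝ)| < 1 := by push_cast at hint ⊢; convert hint using 2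
        exact_mod_cast this
      have := Int.abs_lt_one_iff.mp h2
      omega
    have heq2 : t + (m : ℝ) = t - round t := by
      have : ((-m : ℤ) : ℝ) = round t := by exact_mod_cast hmz
      push_cast at this
      linarith
    rw [dint, ← heq2]

lemma dint_eq_self {t : ℝ} (h : |t| ≤ 1/2) : dint t = |t| := by
  apply le_antisymm
  · simpa using dint_le t 0
  · rcases eq_or_ne ((round t : ℝ)) 0 with h0 | h0
    · simp [dint, h0]
    · have h1 : (1:ℝ) ≤ |(round t : ℝ)| := by
        have hne : round t ≠ 0 := by exact_mod_cast h0
        exact_mod_cast Int.one_le_abs hne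
      have h2 : |(round t:ℝ)| - |t| ≤ |(round t : ℝ) - t| := abs_sub_abs_le_abs_sub _ _
      have h3 : |(round t : ℝ) - t| = |t - round t| := abs_sub_comm _ _
      unfold dint; linarith [h3 ▸ h2]

lemma dint_add_int (t : ℝ) (m : ℤ) : dint (t + m) = dint t := by
  apply le_antisymm
  · have h := dint_le (t + m) (-(round t) - m)
    have : |t + m + ((-(round t) - m : ℤ) : ℝ)| = |t - round t| := by push_cast; ring_nf
    rw [this] at h; exact h
  · have h := dint_le t (-(round (t+m)) + m)
    have : |t + ((-(round (t+m)) + m : ℤ) : ℝ)| = |t + m - round (t+m)| := by push_cast; ring_nf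
    rw [this] at h; exact h



lemma abs_coord_le_norm (x : Eu n) (i : Fin n) : |x i| ≤ ‖x‖ := by
  rw [EuclideanSpace.norm_eq]
  have : |x i| = Real.sqrt (‖x i‖^2) := by
    rw [Real.sqrt_sq_eq_abs]; simp
  rw [this]
  apply Real.sqrt_le_sqrt
  have := Finset.single_le_sum (f := fun j => ‖x j‖^2) (fun j _ => sq_nonneg _)
    (Finset.mem_univ i)
  simpa using this

lemma norm_le_norm_of_abs_le {x y : Eu n} (h : ∀ i, |x i| ≤ |y i|) : ‖x‖ ≤ ‖y‖ := by
  rw [EuclideanSpace.norm_eq, EuclideanSpace.norm_eq]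
  apply Real.sqrt_le_sqrt
  apply Finset.sum_le_sum
  intro i _
  have := h i
  have h2 : ‖x i‖ = |x i| := rfl
  have h3 : ‖y i‖ = |y i| := rfl
  rw [h2, h3]
  exact pow_le_pow_left₀ (abs_nonneg _) this 2

lemma coe_add (x y : Eu n) :
    ((x + y : Eu n) : FlatTorus n) = (x : FlatTorus n) + (y : FlatTorus n) :=
  map_add (QuotientAddGroup.mk' (intLattice n)) x y

lemma coe_sub (x y : Eu n) :
    ((x - y : Eu n) : FlatTorus n) = (x : FlatTorus n) - (y : FlatTorus n) :=
  map_sub (QuotientAddGroup.mk' (intLattice n)) x y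

lemma coe_eq_coe {x y : Eu n} :
    (x : FlatTorus n) = (y : FlatTorus n) ↔ ∀ i, ∃ m : ℤ, x i - y i = m := by
  rw [QuotientAddGroup.eq_iff_sub_mem]
  constructor
  · intro h i
    obtain ⟨m, hm⟩ := h i
    exact ⟨m, by simpa [PiLp.sub_apply] using hm⟩
  · intro h i
    obtain ⟨m, hm⟩ := h i
    exact ⟨m, by simpa [PiLp.sub_apply] using hm⟩

lemma dist_coe_le (x y : Eu n) :
    dist (x : FlatTorus n) (y : FlatTorus n) ≤ ‖x - y‖ := by
  rw [dist_eq_norm]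
  have : (x : FlatTorus n) - (y : FlatTorus n) = ((x - y : Eu n) : FlatTorus n) := by
    exact (map_sub (QuotientAddGroup.mk' (intLattice n)) x y).symm
  rw [this]
  exact QuotientAddGroup.norm_mk_le_norm

lemma norm_coe_le (x : Eu n) : ‖(x : FlatTorus n)‖ ≤ ‖x‖ := QuotientAddGroup.norm_mk_le_norm

lemma dint_le_norm_coe (x : Eu n) (i : Fin n) : dint (x i) ≤ ‖(x : FlatTorus n)‖ := by
  refine le_of_forall_pos_le_add ?_
  intro ε hε
  obtain ⟨m, hm, hlt⟩ := QuotientAddGroup.exists_norm_mk_lt (x : FlatTorus n) hε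
  have hmem : ∀ j, ∃ k : ℤ, m j - x j = k := coe_eq_coe.mp hm
  obtain ⟨k, hk⟩ := hmem i
  have h1 : dint (x i) ≤ |x i + k| := dint_le _ _
  have h2 : x i + k = m i := by linarith [hk]
  calc dint (x i) ≤ |m i| := by rw [← h2]; exact h1
    _ ≤ ‖m‖ := abs_coord_le_norm m i
    _ ≤ ‖(x : FlatTorus n)‖ + ε := le_of_lt hlt

lemma coord_dint_le_dist (x y : Eu n) (i : Fin n) :
    dint (x i - y i) ≤ dist (x : FlatTorus n) (y : FlatTorus n) := by
  rw [dist_eq_norm]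
  have : (x : FlatTorus n) - (y : FlatTorus n) = ((x - y : Eu n) : FlatTorus n) :=
    (map_sub (QuotientAddGroup.mk' (intLattice n)) x y).symm
  rw [this]
  have := dint_le_norm_coe (x - y) i
  simpa [PiLp.sub_apply] using this

/-- the canonical (rounded) representative -/
noncomputable def rmin (x : Eu n) : Eu n :=
  x - (WithLp.equiv 2 (Fin n → ℝ)).symm (fun i => (round (x i) : ℝ))

lemma rmin_apply (x : Eu n) (i : Fin n) : rmin x i = x i - round (x i) := by
  simp [rmin, PiLp.sub_apply, WithLp.equiv_symm_apply]

lemma rmin_coe (x : Eu n) : ((rmin x : Eu n) : FlatTorus n) = (x : FlatTorus n) := by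
  rw [coe_eq_coe]
  intro i
  exact ⟨-round (x i), by rw [rmin_apply]; push_cast; ring⟩

lemma abs_rmin (x : Eu n) (i : Fin n) : |rmin x i| = dint (x i) := by
  rw [rmin_apply]; rfl

lemma norm_coe_eq (x : Eu n) : ‖(x : FlatTorus n)‖ = ‖rmin x‖ := by
  apply le_antisymm
  · rw [← rmin_coe x]; exact norm_coe_le _
  · refine le_of_forall_pos_le_add ?_
    intro ε hε
    obtain ⟨m, hm, hlt⟩ := QuotientAddGroup.exists_norm_mk_lt (x : FlatTorus n) hε
    have hmem := coe_eq_coe.mp hm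
    have hcomp : ∀ i, |rmin x i| ≤ |m i| := by
      intro i
      obtain ⟨k, hk⟩ := hmem i
      have h1 : dint (x i) ≤ |x i + k| := dint_le _ _
      have h2 : x i + (k:ℝ) = m i := by linarith [hk]
      rw [abs_rmin]
      rw [← h2]; exact h1
    calc ‖rmin x‖ ≤ ‖m‖ := norm_le_norm_of_abs_le hcomp
      _ ≤ ‖(x : FlatTorus n)‖ + ε := le_of_lt hlt

/-- coordinates of any minimal representative -/
lemma minrep_coords {x v : Eu n} (hq : (v : FlatTorus n) = (x : FlatTorus n))
    (hn : ‖v‖ = ‖(x : FlatTorus n)‖) (i : Fin n) : |v i| = dint (x i) := by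
  have hge : ∀ j, dint (x j) ≤ |v j| := by
    intro j
    obtain ⟨k, hk⟩ := coe_eq_coe.mp hq j
    have h1 : dint (x j) ≤ |x j + k| := dint_le _ _
    have h2 : x j + (k:ℝ) = v j := by linarith [hk]
    rw [← h2]; exact h1
  have hsum : ∑ j, (v j)^2 = ∑ j, (dint (x j))^2 := by
    have h1 : ‖v‖ = ‖rmin x‖ := by rw [hn, norm_coe_eq]
    have h2 := congrArg (·^2) h1
    simp only [EuclideanSpace.norm_eq] at h2
    rw [Real.sq_sqrt (by positivity), Real.sq_sqrt (by positivity)] at h2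
    simpa [← abs_rmin, sq_abs] using h2
  by_contra hne
  have hlt : (dint (x i))^2 < (v i)^2 := by
    have h3 := hge i
    have : dint (x i) < |v i| := lt_of_le_of_ne h3 (fun h => hne h.symm)
    have h4 := dint_nonneg (x i)
    nlinarith [abs_nonneg (v i), sq_abs (v i)]
  have : ∑ j, (dint (x j))^2 < ∑ j, (v j)^2 := by
    apply Finset.sum_lt_sum (fun j _ => ?_) ⟨i, Finset.mem_univ i, hlt⟩
    have := hge j
    nlinarith [dint_nonneg (x j), abs_nonneg (v j), sq_abs (v j)]
  linarith [hsum]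


/-- classification of metric midpoints between `0` and `y` in the flat torus -/
lemma midpoint_class (y : Eu n) (hL : 0 < ‖(y : FlatTorus n)‖) (m : FlatTorus n)
    (h1 : dist ((0 : Eu n) : FlatTorus n) m = ‖(y : FlatTorus n)‖ / 2)
    (h2 : dist m (y : FlatTorus n) = ‖(y : FlatTorus n)‖ / 2) :
    ∃ v : Eu n, (v : FlatTorus n) = (y : FlatTorus n) ∧ ‖v‖ = ‖(y : FlatTorus n)‖ ∧
      (((2:ℝ)⁻¹ • v : Eu n) : FlatTorus n) = m := by
  set L := ‖(y : FlatTorus n)‖ with hLdef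
  obtain ⟨a, ha⟩ : ∃ a : Eu n, (a : FlatTorus n) = m := Quot.exists_rep m
  set u := rmin a with hudef
  have hum : (u : FlatTorus n) = m := by rw [rmin_coe, ha]
  have hunorm : ‖u‖ = L / 2 := by
    have hz : ((0 : Eu n) : FlatTorus n) = 0 := by simp
    rw [hz, dist_zero_left] at h1
    show ‖rmin a‖ = L / 2
    rw [← norm_coe_eq a, ha]; exact h1
  set w := rmin (y - a) with hwdef
  have hwm : (w : FlatTorus n) = (y : FlatTorus n) - m := by
    rw [rmin_coe, ← ha, coe_sub]
  have hwnorm : ‖w‖ = L / 2 := by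
    have hd : dist m (y : FlatTorus n) = ‖(y : FlatTorus n) - m‖ := by
      rw [dist_eq_norm, norm_sub_rev]
    rw [hd] at h2
    show ‖rmin (y - a)‖ = L / 2
    rw [← norm_coe_eq (y - a), coe_sub, ha]; exact h2
  have hsumcoe : ((u + w : Eu n) : FlatTorus n) = (y : FlatTorus n) := by
    rw [coe_add, hum, hwm]; abel
  have hge : L ≤ ‖u + w‖ := by
    calc L = ‖((u + w : Eu n) : FlatTorus n)‖ := by rw [hsumcoe]
      _ ≤ ‖u + w‖ := norm_coe_le _
  have huw : u = w := by
    have hexp : ‖u + w‖^2 = ‖u‖^2 + 2*⟪u,w⟫ + ‖w‖^2 := norm_add_sq_real u w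
    have hsq : L^2 ≤ ‖u + w‖^2 := by nlinarith [norm_nonneg (u+w)]
    have hinner : ‖u‖ * ‖w‖ ≤ ⟪u,w⟫ := by rw [hunorm, hwnorm]; nlinarith
    have heq : ⟪u,w⟫ = ‖u‖ * ‖w‖ := le_antisymm (real_inner_le_norm u w) hinner
    have h2' := inner_eq_norm_mul_iff_real.mp heq
    rw [hunorm, hwnorm] at h2'
    have hne : (L/2 : ℝ) ≠ 0 := by positivity
    exact smul_right_injective _ hne h2'
  refine ⟨u + w, hsumcoe, ?_, ?_⟩
  · rw [← huw, ← two_smul ℝ, norm_smul, hunorm]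
    simp; ring
  · have : (2:ℝ)⁻¹ • (u + w) = u := by rw [← huw, ← two_smul ℝ, smul_smul]; norm_num
    rw [this, hum]


/-- the midpoint of the unit interval -/
noncomputable def half : unitInterval := ⟨1/2, by constructor <;> norm_num⟩

/-- the pair `(0, y)` in the torus square -/
noncomputable def Pp (y : Eu n) : FlatTorus n × FlatTorus n :=
  (((0 : Eu n) : FlatTorus n), (y : FlatTorus n))

lemma torus_mid {E : Set (FlatTorus n × FlatTorus n)}
    {σ' : FlatTorus n × FlatTorus n → C(unitInterval, FlatTorus n)}
    (hσ : IsGMPROn E σ') {y : Eu n} (hy : Pp y ∈ E)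
    (hL : 0 < ‖(y : FlatTorus n)‖) :
    ∃ w : Eu n, (w : FlatTorus n) = (y : FlatTorus n) ∧ ‖w‖ = ‖(y : FlatTorus n)‖ ∧
      (((2:ℝ)⁻¹ • w : Eu n) : FlatTorus n) = σ' (Pp y) half := by
  obtain ⟨⟨c, hc⟩, h0, h1⟩ := hσ.2 _ hy
  set γ := σ' (Pp y) with hγ
  have h0' : γ 0 = ((0 : Eu n) : FlatTorus n) := h0
  have h1' : γ 1 = (y : FlatTorus n) := h1
  have hzc : (((0 : unitInterval) : ℝ)) = 0 := rfl
  have hoc : (((1 : unitInterval) : ℝ)) = 1 := rfl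
  have hhc : ((half : unitInterval) : ℝ) = 1/2 := rfl
  have hcval : c = ‖(y : FlatTorus n)‖ := by
    have := hc 0 1
    rw [h0', h1', hzc, hoc] at this
    have hz : ((0 : Eu n) : FlatTorus n) = 0 := by simp
    rw [hz, dist_zero_left] at this
    rw [this, abs_of_nonpos (by norm_num : (0:ℝ) - 1 ≤ 0)]; ring
  have hm1 : dist (((0 : Eu n) : FlatTorus n)) (γ half) = ‖(y : FlatTorus n)‖ / 2 := by
    have := hc 0 half
    rw [h0', hzc, hhc] at this
    rw [this, hcval, abs_of_nonpos (by norm_num : (0:ℝ) - 1/2 ≤ 0)]; ring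
  have hm2 : dist (γ half) ((y : FlatTorus n)) = ‖(y : FlatTorus n)‖ / 2 := by
    have := hc half 1
    rw [h1', hhc, hoc] at this
    rw [this, hcval, abs_of_nonpos (by norm_num : (1:ℝ)/2 - 1 ≤ 0)]; ring
  exact midpoint_class y hL (γ half) hm1 hm2

lemma exclusion_core {s ε : ℝ} (hs : s = 1 ∨ s = -1) (hε : 0 < ε) (hε2 : ε ≤ 1/4)
    {vk wk yk : ℝ} (hvk : vk = s/2)
    (hwk : |wk| = dint yk) (hykval : yk = 1/2 + s*ε) (hint : ∃ m : ℤ, wk - yk = m) :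
    3/8 ≤ dint (wk/2 - vk/2) := by
  have hdy : dint yk = 1/2 - ε := by
    rcases hs with rfl | rfl
    · have h1 : yk = (-1/2 + ε) + ((1 : ℤ) : ℝ) := by rw [hykval]; push_cast; ring
      rw [h1, dint_add_int, dint_eq_self (by rw [abs_le]; constructor <;> linarith),
        abs_of_nonpos (by linarith)]
      ring
    · have h1 : yk = 1/2 - ε := by rw [hykval]; ring
      rw [h1, dint_eq_self (by rw [abs_le]; constructor <;> linarith),
        abs_of_nonneg (by linarith)]
  have hwkval : wk = -s * (1/2 - ε) := by
    obtain ⟨m, hm⟩ := hint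
    have h38 : (0:ℝ) ≤ 1/2 - ε := by linarith
    rcases (abs_eq h38).mp (hwk.trans hdy) with h | h
    · rcases hs with rfl | rfl
      · exfalso
        have hm' : (m:ℝ) = -(2*ε) := by rw [← hm, h, hykval]; ring
        have h1' : m < 0 := by exact_mod_cast (by rw [hm']; linarith : (m:ℝ) < 0)
        have h2' : -1 < m := by exact_mod_cast (by rw [hm']; linarith : (-1:ℝ) < m)
        omega
      · rw [h]; ring
    · rcases hs with rfl | rfl
      · rw [h]; ring
      · exfalso
        have hm' : (m:ℝ) = -1 + 2*ε := by rw [← hm, h, hykval]; ring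
        have h1' : m < 0 := by exact_mod_cast (by rw [hm']; linarith : (m:ℝ) < 0)
        have h2' : -1 < m := by exact_mod_cast (by rw [hm']; linarith : (-1:ℝ) < m)
        omega
  have hdiff : wk/2 - vk/2 = -s * (1/2 - ε/2) := by rw [hwkval, hvk]; ring
  have habs : |(-s * (1/2 - ε/2))| = 1/2 - ε/2 := by
    rcases hs with rfl | rfl
    · rw [show -(1:ℝ) * (1/2 - ε/2) = -(1/2 - ε/2) by ring, abs_neg,
        abs_of_nonneg (by linarith)]
    · rw [show -(-1:ℝ) * (1/2 - ε/2) = (1/2 - ε/2) by ring, abs_of_nonneg (by linarith)]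
  rw [hdiff, dint_eq_self (by rw [habs]; linarith), habs]
  linarith

lemma dint_half : dint (1/2 : ℝ) = 1/2 := by
  rw [dint_eq_self (by rw [abs_of_nonneg] <;> norm_num), abs_of_nonneg] <;> norm_num

lemma dist_Pp_le (y p : Eu n) : dist (Pp y) (Pp p) ≤ ‖y - p‖ := by
  rw [Prod.dist_eq]
  apply max_le
  · simp [Pp]
  · exact dist_coe_le y p

lemma step_exclude {E : Set (FlatTorus n × FlatTorus n)}
    {σ' : FlatTorus n × FlatTorus n → C(unitInterval, FlatTorus n)}
    (hσ : IsGMPROn E σ') {p : Eu n} {k : Fin n} (hpk : p k = 1/2) (hpE : Pp p ∈ E)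
    {δ : ℝ} (hcont : ∀ e ∈ E, dist e (Pp p) < δ → dist (σ' e) (σ' (Pp p)) < 1/8) :
    ∃ s : ℝ, (s = 1 ∨ s = -1) ∧
      ∀ y : Eu n, ∀ ε : ℝ, 0 < ε → ε ≤ 1/4 → y k = 1/2 + s*ε →
        dist (Pp y) (Pp p) < δ → Pp y ∉ E := by
  have hLp : 0 < ‖(p : FlatTorus n)‖ := by
    have h1 := dint_le_norm_coe p k
    rw [hpk, dint_half] at h1
    linarith
  obtain ⟨v, hv1, hv2, hv3⟩ := torus_mid hσ hpE hLp
  have hvk : |v k| = 1/2 := by rw [minrep_coords hv1 hv2 k, hpk, dint_half]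
  refine ⟨2 * v k, ?_, ?_⟩
  · rcases (abs_eq (by norm_num : (0:ℝ) ≤ 1/2)).mp hvk with h | h
    · left; rw [h]; ring
    · right; rw [h]; ring
  intro y ε hε hε2 hyk hdist hyE
  have hs : (2 * v k = 1 ∨ 2 * v k = -1) := by
    rcases (abs_eq (by norm_num : (0:ℝ) ≤ 1/2)).mp hvk with h | h
    · left; rw [h]; ring
    · right; rw [h]; ring
  have hdy : dint (y k) = 1/2 - ε := by
    rcases hs with h | h
    · have h1 : y k = (-1/2 + ε) + ((1 : ℤ) : ℝ) := by rw [hyk, h]; push_cast; ring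
      rw [h1, dint_add_int, dint_eq_self (by rw [abs_le]; constructor <;> linarith),
        abs_of_nonpos (by linarith)]
      ring
    · have h1 : y k = 1/2 - ε := by rw [hyk, h]; ring
      rw [h1, dint_eq_self (by rw [abs_le]; constructor <;> linarith),
        abs_of_nonneg (by linarith)]
  have hLy : 0 < ‖(y : FlatTorus n)‖ := by
    have h1 := dint_le_norm_coe y k
    rw [hdy] at h1
    linarith
  obtain ⟨w, hw1, hw2, hw3⟩ := torus_mid hσ hyE hLy
  have hwk : |w k| = dint (y k) := minrep_coords hw1 hw2 k
  have hint : ∃ m : ℤ, w k - y k = m := coe_eq_coe.mp hw1 k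
  have hcore := exclusion_core hs hε hε2 (by ring : v k = (2 * v k)/2) hwk hyk hint
  have hcoord : w k / 2 - v k / 2 =
      ((2:ℝ)⁻¹ • w : Eu n) k - ((2:ℝ)⁻¹ • v : Eu n) k := by
    simp [PiLp.smul_apply, smul_eq_mul]
    ring
  have hble : (3:ℝ)/8 ≤ dist ((((2:ℝ)⁻¹ • w : Eu n)) : FlatTorus n)
      ((((2:ℝ)⁻¹ • v : Eu n)) : FlatTorus n) := by
    refine le_trans ?_ (coord_dint_le_dist ((2:ℝ)⁻¹ • w) ((2:ℝ)⁻¹ • v) k)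
    rw [← hcoord]
    exact hcore
  have hlt : dist (σ' (Pp y)) (σ' (Pp p)) < 1/8 := hcont _ hyE hdist
  have happ : dist (σ' (Pp y) half) (σ' (Pp p) half) ≤ dist (σ' (Pp y)) (σ' (Pp p)) :=
    ContinuousMap.dist_apply_le_dist half
  rw [← hw3, ← hv3] at happ
  linarith

end GCwork

open GCwork in
/-- **The geodesic complexity of the flat `n`-torus is at least `n`.**
`Tⁿ × Tⁿ` cannot be partitioned into `n` locally compact subsets each of which
admits a geodesic motion planning rule. -/
theorem flatTorus_no_partition_into_n_gmpr_sets (n : ℕ) (hn : 1 ≤ n) :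
    ¬ ∃ E : Fin n → Set (FlatTorus n × FlatTorus n),
        (∀ z : FlatTorus n × FlatTorus n, ∃! j, z ∈ E j) ∧
        (∀ j, LocallyCompactSpace (E j)) ∧
        (∀ j, ∃ σ', IsGMPROn (E j) σ') := by
  rintro ⟨E, hpart, hlc, hgmpr⟩
  classical
  choose σ hσ using hgmpr
  have key : ∀ k : ℕ, k ≤ n → ∃ (p : Eu n) (ρ : ℝ) (used : Finset (Fin n)),
      0 < ρ ∧ used.card = k ∧ (∀ i : Fin n, k ≤ (i : ℕ) → p i = 1/2) ∧
      ∀ y : Eu n, (∀ i : Fin n, (i : ℕ) < k → y i = p i) → ‖y - p‖ < ρ →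
        ∀ j ∈ used, Pp y ∉ E j := by
    intro k
    induction k with
    | zero =>
      intro _
      refine ⟨(WithLp.equiv 2 (Fin n → ℝ)).symm (fun _ => 1/2), 1, ∅, one_pos, rfl, ?_, ?_⟩
      · intro i _
        exact rfl
      · intro y _ _ j hj
        exact absurd hj (Finset.notMem_empty j)
    | succ k ih =>
      intro hk1
      obtain ⟨p, ρ, used, hρ, hcard, hhalf, hguard⟩ := ih (Nat.le_of_succ_le hk1)
      have hkn : k < n := hk1
      set κ : Fin n := ⟨k, hkn⟩ with hκ
      obtain ⟨j₀, hj₀, -⟩ := hpart (Pp p)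
      have hj₀new : j₀ ∉ used := by
        intro hmem
        exact hguard p (fun _ _ => rfl) (by simpa using hρ) j₀ hmem hj₀
      have hconto := (hσ j₀).1
      rw [Metric.continuousOn_iff] at hconto
      obtain ⟨δ, hδpos, hδ⟩ := hconto (Pp p) hj₀ (1/8) (by norm_num)
      have hpκ : p κ = 1/2 := hhalf κ (by simp [hκ])
      obtain ⟨s, hs, hexcl⟩ := step_exclude (hσ j₀) hpκ hj₀ (fun e he hd => hδ e he hd)
      set ε := min (min ρ δ) 1 / 4 with hε
      have hminpos : 0 < min (min ρ δ) 1 := lt_min (lt_min hρ hδpos) one_pos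
      have hmin2 : 0 < min ρ δ := lt_min hρ hδpos
      have hεpos : 0 < ε := by rw [hε]; exact div_pos hminpos (by norm_num)
      have hε14 : ε ≤ 1/4 := by
        rw [hε]
        have := min_le_right (min ρ δ) 1
        linarith
      have hεmin : ε ≤ min ρ δ / 4 := by
        rw [hε]
        have := min_le_left (min ρ δ) 1
        linarith
      set p' := p + EuclideanSpace.single κ (s * ε) with hp'
      set ρ' := min ρ δ - ε with hρ'def
      have hρ'pos : 0 < ρ' := by rw [hρ'def]; linarith
      have hsingle : ‖EuclideanSpace.single κ (s * ε)‖ = ε := by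
        rw [EuclideanSpace.norm_single, Real.norm_eq_abs]
        rcases hs with rfl | rfl
        · rw [show (1:ℝ) * ε = ε by ring]
          exact abs_of_nonneg hεpos.le
        · rw [show (-1:ℝ) * ε = -ε by ring, abs_neg]
          exact abs_of_nonneg hεpos.le
      have hp'apply : ∀ i : Fin n, i ≠ κ → p' i = p i := by
        intro i hi
        rw [hp']
        rw [PiLp.add_apply, EuclideanSpace.single_apply, if_neg hi, add_zero]
      have hp'κ : p' κ = 1/2 + s * ε := by
        rw [hp', PiLp.add_apply, EuclideanSpace.single_apply, if_pos rfl, hpκ]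
      refine ⟨p', ρ', insert j₀ used, hρ'pos,
        by rw [Finset.card_insert_of_notMem hj₀new, hcard], ?_, ?_⟩
      · intro i hi
        have hne : i ≠ κ := by
          intro h
          rw [h] at hi
          simp only [hκ] at hi
          omega
        rw [hp'apply i hne]
        refine hhalf i ?_
        omega
      · intro y hagree hnorm j hj
        have hyp' : ‖y - p‖ < min ρ δ := by
          have h1 : y - p = (y - p') + (p' - p) := by abel
          have h2 : p' - p = EuclideanSpace.single κ (s * ε) := by rw [hp']; abel
          calc ‖y - p‖ ≤ ‖y - p'‖ + ‖p' - p‖ := by rw [h1]; exact norm_add_le _ _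
            _ < ρ' + ε := by rw [h2, hsingle]; linarith
            _ = min ρ δ := by rw [hρ'def]; ring
        have hagree' : ∀ i : Fin n, (i : ℕ) < k → y i = p i := by
          intro i hik
          have hne : i ≠ κ := by
            intro h
            rw [h] at hik
            simp only [hκ] at hik
            omega
          rw [hagree i (by omega), hp'apply i hne]
        rcases Finset.mem_insert.mp hj with rfl | hjold
        · have hyκ : y κ = 1/2 + s * ε := by
            have hκlt : ((κ : Fin n) : ℕ) < k + 1 := by simp [hκ]
            rw [hagree κ hκlt, hp'κ]
          exact hexcl y ε hεpos hε14 hyκ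
            (lt_of_le_of_lt (dist_Pp_le y p) (lt_of_lt_of_le hyp' (min_le_right ρ δ)))
        · exact hguard y hagree' (lt_of_lt_of_le hyp' (min_le_left ρ δ)) j hjold
  obtain ⟨p, ρ, used, hρ, hcard, -, hguard⟩ := key n le_rfl
  have huniv : used = Finset.univ := by
    apply Finset.eq_univ_of_card
    rw [hcard, Fintype.card_fin]
  obtain ⟨j₀, hj₀, -⟩ := hpart (Pp p)
  exact hguard p (fun _ _ => rfl) (by simpa using hρ) j₀ (huniv ▸ Finset.mem_univ j₀) hj₀
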